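/- Let d ≥ 1, r₀ ∈ ℕ and κ ∈ (0,1). For every ρ > 0 there exist δ > 0, ζ = ζ(δ) > 0, M > 0 and p₀ ∈ (0,1) such that for every p ∈ (p₀, 1] and every u ∈ ℝ^d with |u| ≤ δ one has ‖K_{κ,p,u}‖_ζ ≤ ρ and Σ_{i=1}^d ‖∂_{u_i} K_{κ,p,u}‖_ζ + Σ_{i,j=1}^d ‖∂²_{u_i u_j} K_{κ,p,u}‖_ζ + Σ_{i,j,k=1}^d ‖∂³_{u_i u_j u_k} K_{κ,p,u}‖_ζ ≤ M. -/

import Mathlib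

open scoped BigOperators ENNReal

noncomputable section

/-- `ℝ^d` with the Euclidean norm. -/
abbrev Euc (d : ℕ) : Type := EuclideanSpace ℝ (Fin d)

/-- Partial derivative in the `i`-th coordinate direction. -/
def pder {d : ℕ} (i : Fin d) (f : Euc d → ℝ) : Euc d → ℝ := fun z =>
  fderiv ℝ f z (EuclideanSpace.single i 1)

/-- Iterated partial derivative `∂^α` for a multi-index `α`. -/
def pderMulti {d : ℕ} (α : Fin d → ℕ) (f : Euc d → ℝ) : Euc d → ℝ :=
  (List.finRange d).foldr (fun i g => (pder i)^[α i] g) f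

/-- Multi-indices of degree at most `r₀` (entries bounded by `r₀`). -/
def mIdx (d r₀ : ℕ) : Finset (Fin d → Fin (r₀ + 1)) :=
  Finset.univ.filter fun α => ∑ i, (α i : ℕ) ≤ r₀

/-- The weighted sum `Σ_{|α| ≤ r₀} ζ^{|α|} |∂^α K(z)| e^{−ζ^{−2}|z|²}`. -/
def wfun (d r₀ : ℕ) (ζ : ℝ) (K : Euc d → ℝ) (z : Euc d) : ℝ :=
  ∑ α ∈ mIdx d r₀,
    ζ ^ (∑ i, (α i : ℕ)) * |pderMulti (fun i => (α i : ℕ)) K z| *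
      Real.exp (-(ζ ^ 2)⁻¹ * ‖z‖ ^ 2)

/-- The norm `‖K‖_ζ` of the space `E(d, ζ, r₀)`, as an extended nonnegative real. -/
def zNorm (d r₀ : ℕ) (ζ : ℝ) (K : Euc d → ℝ) : ℝ≥0∞ :=
  ⨆ z : Euc d, ENNReal.ofReal (wfun d r₀ ζ K z)

/-- The Mayer function `K_{κ,p,u}` of the Biskup–Kotecký double-Gaussian potential. -/
def KBK (d : ℕ) (κ p : ℝ) (u : Euc d) : Euc d → ℝ := fun z =>
  (∏ i, (p + (1 - p) * Real.exp (1 / 2 * (1 - κ) * (z i - u i) ^ 2))) - 1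

/-- First partial derivative `∂_{uᵢ} K_{κ,p,u}` (pointwise in `z`). -/
def KBKd1 (d : ℕ) (κ p : ℝ) (i : Fin d) (u : Euc d) : Euc d → ℝ := fun z =>
  fderiv ℝ (fun v : Euc d => KBK d κ p v z) u (EuclideanSpace.single i 1)

/-- Second partial derivative `∂²_{uᵢuⱼ} K_{κ,p,u}` (pointwise in `z`). -/
def KBKd2 (d : ℕ) (κ p : ℝ) (i j : Fin d) (u : Euc d) : Euc d → ℝ := fun z =>
  fderiv ℝ (fun v : Euc d => KBKd1 d κ p j v z) u (EuclideanSpace.single i 1)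

/-- Third partial derivative `∂³_{uᵢuⱼu_k} K_{κ,p,u}` (pointwise in `z`). -/
def KBKd3 (d : ℕ) (κ p : ℝ) (i j k : Fin d) (u : Euc d) : Euc d → ℝ := fun z =>
  fderiv ℝ (fun v : Euc d => KBKd2 d κ p j k v z) u (EuclideanSpace.single i 1)

/-- Polynomial family for derivatives of the gaussian. -/
def Ppoly (c : ℝ) : ℕ → Polynomial ℝ
  | 0 => 1
  | n + 1 => (Ppoly c n).derivative + Polynomial.C (2 * c) * Polynomial.X * Ppoly c n

/-- Closed form of the `n`-th derivative of `t ↦ p + (1-p)·exp(c t²)`. -/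
def gd (c p : ℝ) : ℕ → ℝ → ℝ
  | 0 => fun t => p + (1 - p) * Real.exp (c * t ^ 2)
  | n + 1 => fun t => (1 - p) * ((Ppoly c (n + 1)).eval t * Real.exp (c * t ^ 2))

lemma hasDerivAt_exp_sq (c t : ℝ) :
    HasDerivAt (fun t : ℝ => Real.exp (c * t ^ 2)) (2 * c * t * Real.exp (c * t ^ 2)) t := by
  have h := (((hasDerivAt_pow 2 t).const_mul c).exp)
  convert h using 1
  ring

lemma hasDerivAt_gd (c p : ℝ) (n : ℕ) (t : ℝ) :
    HasDerivAt (gd c p n) (gd c p (n + 1) t) t := by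
  cases n with
  | zero =>
    have h := ((hasDerivAt_exp_sq c t).const_mul (1 - p)).const_add p
    refine h.congr_deriv ?_; symm
    show (1 - p) * ((Ppoly c 1).eval t * Real.exp (c * t ^ 2)) = _
    simp only [Ppoly, Polynomial.derivative_one, Polynomial.eval_add, Polynomial.eval_mul,
      Polynomial.eval_C, Polynomial.eval_X, Polynomial.eval_one, Polynomial.eval_zero, zero_add, mul_one]
  | succ n =>
    have h := ((((Ppoly c (n + 1)).hasDerivAt t).mul (hasDerivAt_exp_sq c t)).const_mul (1 - p))
    refine h.congr_deriv ?_; symm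
    show (1 - p) * ((Ppoly c (n + 2)).eval t * Real.exp (c * t ^ 2)) = _
    simp only [Ppoly, Polynomial.eval_add, Polynomial.eval_mul, Polynomial.eval_C,
      Polynomial.eval_X]
    ring

def Ff (d : ℕ) (c p : ℝ) (m : Fin d → ℕ) : Euc d → ℝ := fun w => ∏ i, gd c p (m i) (w i)

/-- Single-index bump. -/
def eIdx {d : ℕ} (i : Fin d) : Fin d → ℕ := fun j => if j = i then 1 else 0

lemma hasFDerivAt_Ff (d : ℕ) (c p : ℝ) (m : Fin d → ℕ) (w : Euc d) :
    HasFDerivAt (Ff d c p m)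
      (∑ i, (∏ j ∈ Finset.univ.erase i, gd c p (m j) (w j)) •
        (gd c p (m i + 1) (w i) • (EuclideanSpace.proj i : Euc d →L[ℝ] ℝ))) w := by
  apply HasFDerivAt.finset_prod
  intro i _
  have hproj : HasFDerivAt (fun x : Euc d => x i) (EuclideanSpace.proj i : Euc d →L[ℝ] ℝ) w :=
    (EuclideanSpace.proj i : Euc d →L[ℝ] ℝ).hasFDerivAt
  exact (hasDerivAt_gd c p (m i) (w i)).comp_hasFDerivAt w hproj

lemma Ff_succ (d : ℕ) (c p : ℝ) (m : Fin d → ℕ) (i : Fin d) (w : Euc d) :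
    Ff d c p (fun j => m j + eIdx i j) w
      = (∏ j ∈ Finset.univ.erase i, gd c p (m j) (w j)) * gd c p (m i + 1) (w i) := by
  rw [Ff, ← Finset.prod_erase_mul Finset.univ _ (Finset.mem_univ i)]
  congr 1
  · exact Finset.prod_congr rfl fun j hj => by
      simp [eIdx, (Finset.ne_of_mem_erase hj)]
  · simp [eIdx]

lemma fderiv_Ff_apply (d : ℕ) (c p : ℝ) (m : Fin d → ℕ) (i : Fin d) (w : Euc d) :
    (∑ i', (∏ j ∈ Finset.univ.erase i', gd c p (m j) (w j)) •
        (gd c p (m i' + 1) (w i') • (EuclideanSpace.proj i' : Euc d →L[ℝ] ℝ)))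
        (EuclideanSpace.single i 1)
      = Ff d c p (fun j => m j + eIdx i j) w := by
  rw [ContinuousLinearMap.sum_apply, Ff_succ]
  rw [Finset.sum_eq_single i]
  · simp [EuclideanSpace.single_apply]
  · intro b _ hb
    simp [EuclideanSpace.single_apply, hb]
  · simp


section chunk2
variable {d : ℕ} (c p : ℝ)

lemma pder_Ff (m : Fin d → ℕ) (u : Euc d) (i : Fin d) :
    pder i (fun z : Euc d => Ff d c p m (z - u))
      = fun z => Ff d c p (fun j => m j + eIdx i j) (z - u) := by
  funext z
  have hin : HasFDerivAt (fun z : Euc d => z - u) (ContinuousLinearMap.id ℝ (Euc d)) z :=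
    (hasFDerivAt_id z).sub_const u
  have h := (hasFDerivAt_Ff d c p m (z - u)).comp z hin
  have h2 : HasFDerivAt (fun z : Euc d => Ff d c p m (z - u))
      ((∑ i', (∏ j ∈ Finset.univ.erase i', gd c p (m j) ((z - u) j)) •
        (gd c p (m i' + 1) ((z - u) i') • (EuclideanSpace.proj i' : Euc d →L[ℝ] ℝ))).comp
      (ContinuousLinearMap.id ℝ (Euc d))) z := h
  rw [pder, h2.fderiv]
  simpa using fderiv_Ff_apply d c p m i (z - u)

lemma pder_neg (f : Euc d → ℝ) (i : Fin d) :
    pder i (fun z => -f z) = fun z => -(pder i f z) := by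
  funext z
  rw [pder, fderiv_fun_neg]
  simp [pder]

lemma pder_sub_const (f : Euc d → ℝ) (i : Fin d) (a : ℝ) :
    pder i (fun z => f z - a) = pder i f := by
  funext z
  rw [pder, fderiv_sub_const]
  rfl

lemma iter_pder_Ff (m : Fin d → ℕ) (u : Euc d) (i : Fin d) (n : ℕ) :
    (pder i)^[n] (fun z : Euc d => Ff d c p m (z - u))
      = fun z => Ff d c p (fun j => m j + n * eIdx i j) (z - u) := by
  induction n with
  | zero => simp
  | succ n ih =>
    rw [Function.iterate_succ_apply', ih, pder_Ff]
    have : (fun j => m j + n * eIdx i j + eIdx i j) = (fun j => m j + (n + 1) * eIdx i j) := by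
      funext j; ring
    rw [this]

lemma foldr_pder_Ff (α : Fin d → ℕ) (l : List (Fin d)) (m : Fin d → ℕ) (u : Euc d) :
    List.foldr (fun i g => (pder i)^[α i] g) (fun z : Euc d => Ff d c p m (z - u)) l
      = fun z => Ff d c p (fun j => m j + α j * l.count j) (z - u) := by
  induction l with
  | nil => simp
  | cons i l ih =>
    rw [List.foldr_cons, ih, iter_pder_Ff]
    have : (fun j => m j + α j * l.count j + α i * eIdx i j)
        = fun j => m j + α j * (i :: l).count j := by
      funext j
      by_cases h : j = i
      · subst h; simp [List.count_cons, eIdx]; ring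
      · simp [List.count_cons, eIdx, h, Ne.symm h]
    rw [this]

lemma pderMulti_Ff (α : Fin d → ℕ) (m : Fin d → ℕ) (u : Euc d) :
    pderMulti α (fun z : Euc d => Ff d c p m (z - u))
      = fun z => Ff d c p (fun j => m j + α j) (z - u) := by
  rw [pderMulti, foldr_pder_Ff]
  have : ∀ j : Fin d, (List.finRange d).count j = 1 := fun j =>
    List.count_eq_one_of_mem (List.nodup_finRange d) (List.mem_finRange j)
  simp [this]

lemma iter_pder_neg (f : Euc d → ℝ) (i : Fin d) (n : ℕ) :
    (pder i)^[n] (fun z => -f z) = fun z => -((pder i)^[n] f z) := by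
  induction n with
  | zero => simp
  | succ n ih =>
    rw [Function.iterate_succ_apply', ih, pder_neg, Function.iterate_succ_apply']

lemma pderMulti_neg (α : Fin d → ℕ) (f : Euc d → ℝ) :
    pderMulti α (fun z => -f z) = fun z => -(pderMulti α f z) := by
  rw [pderMulti, pderMulti]
  induction (List.finRange d) with
  | nil => rfl
  | cons i l ih =>
    rw [List.foldr_cons, List.foldr_cons, ih]
    exact iter_pder_neg _ i (α i)

lemma iter_pder_sub_const (f : Euc d → ℝ) (i : Fin d) (a : ℝ) (n : ℕ) :
    (pder i)^[n + 1] (fun z => f z - a) = (pder i)^[n + 1] f := by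
  rw [Function.iterate_succ_apply, Function.iterate_succ_apply, pder_sub_const]

lemma foldr_pder_sub_const (α : Fin d → ℕ) (l : List (Fin d)) (f : Euc d → ℝ) (a : ℝ) :
    List.foldr (fun i g => (pder i)^[α i] g) (fun z : Euc d => f z - a) l
      = fun z => List.foldr (fun i g => (pder i)^[α i] g) f l z -
          (if ∀ j ∈ l, α j = 0 then a else 0) := by
  induction l with
  | nil => simp
  | cons i l ih =>
    rw [List.foldr_cons, List.foldr_cons, ih]
    by_cases hi : α i = 0
    · rw [hi]
      simp only [Function.iterate_zero, id_eq]
      by_cases hl : ∀ j ∈ l, α j = 0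
      · simp [hl, hi]
      · have : ¬ (∀ j ∈ (i :: l), α j = 0) := fun h => hl fun j hj => h j (List.mem_cons_of_mem i hj)
        simp [hl, this]
    · obtain ⟨n, hn⟩ : ∃ n, α i = n + 1 := ⟨α i - 1, by omega⟩
      have hcons : ¬ (∀ j ∈ (i :: l), α j = 0) := fun h => hi (h i List.mem_cons_self)
      rw [hn, if_neg hcons]
      by_cases hl : ∀ j ∈ l, α j = 0
      · rw [if_pos hl, iter_pder_sub_const]
        simp
      · rw [if_neg hl]
        simp
end chunk2


section chunk3
variable {d : ℕ} (c p : ℝ)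

lemma pderMulti_sub_const (α : Fin d → ℕ) (f : Euc d → ℝ) (a : ℝ) :
    pderMulti α (fun z => f z - a)
      = fun z => pderMulti α f z - (if ∀ j, α j = 0 then a else 0) := by
  rw [pderMulti, pderMulti, foldr_pder_sub_const]
  have : (∀ j ∈ List.finRange d, α j = 0) ↔ (∀ j, α j = 0) := by
    simp [List.mem_finRange]
  simp only [this]

lemma uderiv_Ff (m : Fin d → ℕ) (u z : Euc d) (i : Fin d) :
    fderiv ℝ (fun v : Euc d => Ff d c p m (z - v)) u (EuclideanSpace.single i 1)
      = -Ff d c p (fun j => m j + eIdx i j) (z - u) := by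
  have hin : HasFDerivAt (fun v : Euc d => z - v) (-(ContinuousLinearMap.id ℝ (Euc d))) u := by
    exact (hasFDerivAt_id u).const_sub z
  have h := (hasFDerivAt_Ff d c p m (z - u)).comp u hin
  have h2 : HasFDerivAt (fun v : Euc d => Ff d c p m (z - v))
      ((∑ i', (∏ j ∈ Finset.univ.erase i', gd c p (m j) ((z - u) j)) •
        (gd c p (m i' + 1) ((z - u) i') • (EuclideanSpace.proj i' : Euc d →L[ℝ] ℝ))).comp
      (-(ContinuousLinearMap.id ℝ (Euc d)))) u := h
  rw [h2.fderiv]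
  rw [ContinuousLinearMap.comp_apply]
  have : (-(ContinuousLinearMap.id ℝ (Euc d))) (EuclideanSpace.single i 1)
      = -(EuclideanSpace.single i 1) := rfl
  rw [this, map_neg, fderiv_Ff_apply]

variable (κ : ℝ) {p}

lemma KBK_eq (u : Euc d) :
    KBK d κ p u = fun z => Ff d (1 / 2 * (1 - κ)) p (fun _ => 0) (z - u) - 1 := by
  funext z
  unfold KBK Ff
  congr 1

lemma KBKd1_eq (i : Fin d) (u : Euc d) :
    KBKd1 d κ p i u = fun z => -Ff d (1 / 2 * (1 - κ)) p (eIdx i) (z - u) := by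
  funext z
  unfold KBKd1
  have hfun : (fun v : Euc d => KBK d κ p v z)
      = fun v => Ff d (1 / 2 * (1 - κ)) p (fun _ => 0) (z - v) - 1 := by
    funext v
    exact congrFun (KBK_eq κ v) z
  rw [hfun, fderiv_sub_const, uderiv_Ff]
  have harg : (fun j : Fin d => 0 + eIdx i j) = eIdx i := by funext j; simp
  rw [harg]

lemma KBKd2_eq (i j : Fin d) (u : Euc d) :
    KBKd2 d κ p i j u
      = fun z => Ff d (1 / 2 * (1 - κ)) p (fun l => eIdx j l + eIdx i l) (z - u) := by
  funext z
  unfold KBKd2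
  have hfun : (fun v : Euc d => KBKd1 d κ p j v z)
      = fun v => -Ff d (1 / 2 * (1 - κ)) p (eIdx j) (z - v) := by
    funext v
    exact congrFun (KBKd1_eq κ j v) z
  rw [hfun, fderiv_fun_neg, ContinuousLinearMap.neg_apply, uderiv_Ff, neg_neg]

lemma KBKd3_eq (i j k : Fin d) (u : Euc d) :
    KBKd3 d κ p i j k u
      = fun z => -Ff d (1 / 2 * (1 - κ)) p (fun l => eIdx j l + eIdx k l + eIdx i l) (z - u) := by
  funext z
  unfold KBKd3
  have hfun : (fun v : Euc d => KBKd2 d κ p j k v z)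
      = fun v => Ff d (1 / 2 * (1 - κ)) p (fun l => eIdx k l + eIdx j l) (z - v) := by
    funext v
    exact congrFun (KBKd2_eq κ j k v) z
  rw [hfun, uderiv_Ff]
  have harg : (fun l => eIdx k l + eIdx j l + eIdx i l)
      = (fun l => eIdx j l + eIdx k l + eIdx i l) := by funext l; ring
  rw [harg]

end chunk3


section chunk4

lemma one_le_rprod {ι : Type*} (s : Finset ι) (f : ι → ℝ) (h : ∀ i ∈ s, 1 ≤ f i) :
    1 ≤ ∏ i ∈ s, f i := by
  calc (1:ℝ) = ∏ _i ∈ s, 1 := by simp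
    _ ≤ ∏ i ∈ s, f i := Finset.prod_le_prod (by simp) h

lemma abs_pow_le (t : ℝ) (i : ℕ) : |t| ^ i ≤ 1 + (t ^ 2) ^ i := by
  rcases le_or_gt (|t|) 1 with h | h
  · have := pow_le_one₀ (n := i) (abs_nonneg t) h
    have h2 : (0:ℝ) ≤ (t ^ 2) ^ i := by positivity
    linarith
  · have h1 : |t| ≤ t ^ 2 := by nlinarith [abs_nonneg t, sq_abs t]
    have := pow_le_pow_left₀ (abs_nonneg t) h1 i
    have h2 : (0:ℝ) ≤ 1 := zero_le_one
    linarith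

lemma pow_sq_le_exp {ε : ℝ} (hε : 0 < ε) (t : ℝ) (i : ℕ) :
    (t ^ 2) ^ i ≤ (i.factorial : ℝ) * ε⁻¹ ^ i * Real.exp (ε * t ^ 2) := by
  have h := Real.pow_div_factorial_le_exp (x := ε * t ^ 2) (by positivity) i
  have hfac : (0:ℝ) < i.factorial := by exact_mod_cast i.factorial_pos
  rw [div_le_iff₀ hfac] at h
  have : (ε * t ^ 2) ^ i = ε ^ i * (t ^ 2) ^ i := mul_pow _ _ _
  rw [this] at h
  have hεi : (0:ℝ) < ε ^ i := by positivity
  calc (t ^ 2) ^ i = (ε ^ i * (t ^ 2) ^ i) * (ε⁻¹) ^ i := by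
        rw [mul_right_comm, ← mul_pow, mul_inv_cancel₀ hε.ne', one_pow, one_mul]
    _ ≤ (Real.exp (ε * t ^ 2) * i.factorial) * (ε⁻¹) ^ i := by
        apply mul_le_mul_of_nonneg_right h (by positivity)
    _ = (i.factorial : ℝ) * ε⁻¹ ^ i * Real.exp (ε * t ^ 2) := by ring

lemma polybound (P : Polynomial ℝ) {ε : ℝ} (hε : 0 < ε) :
    ∃ C : ℝ, 0 ≤ C ∧ ∀ t, |P.eval t| ≤ C * Real.exp (ε * t ^ 2) := by
  refine ⟨∑ i ∈ Finset.range (P.natDegree + 1),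
    |P.coeff i| * (1 + (i.factorial : ℝ) * ε⁻¹ ^ i), by positivity, fun t => ?_⟩
  have h1 : |P.eval t| ≤ ∑ i ∈ Finset.range (P.natDegree + 1), |P.coeff i| * |t| ^ i := by
    rw [Polynomial.eval_eq_sum_range]
    refine (Finset.abs_sum_le_sum_abs _ _).trans ?_
    apply Finset.sum_le_sum
    intro i _
    rw [abs_mul, abs_pow]
  refine h1.trans ?_
  rw [Finset.sum_mul]
  apply Finset.sum_le_sum
  intro i _
  have hexp : (1:ℝ) ≤ Real.exp (ε * t ^ 2) := Real.one_le_exp (by positivity)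
  have h2 : |t| ^ i ≤ (1 + (i.factorial : ℝ) * ε⁻¹ ^ i) * Real.exp (ε * t ^ 2) := by
    refine (abs_pow_le t i).trans ?_
    have h3 := pow_sq_le_exp hε t i
    have h4 : (0:ℝ) ≤ (i.factorial : ℝ) * ε⁻¹ ^ i := by positivity
    rw [add_mul, one_mul]
    linarith
  calc |P.coeff i| * |t| ^ i
      ≤ |P.coeff i| * ((1 + (i.factorial : ℝ) * ε⁻¹ ^ i) * Real.exp (ε * t ^ 2)) :=
        mul_le_mul_of_nonneg_left h2 (abs_nonneg _)
    _ = |P.coeff i| * (1 + (i.factorial : ℝ) * ε⁻¹ ^ i) * Real.exp (ε * t ^ 2) := by ring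

lemma exists_D (c : ℝ) {ε : ℝ} (hε : 0 < ε) (N : ℕ) :
    ∃ D : ℝ, 1 ≤ D ∧ ∀ n ≤ N, ∀ t, |(Ppoly c n).eval t| ≤ D * Real.exp (ε * t ^ 2) := by
  choose C hC0 hC using fun n => polybound (Ppoly c n) hε
  refine ⟨1 + ∑ n ∈ Finset.range (N + 1), C n, ?_, ?_⟩
  · have : (0:ℝ) ≤ ∑ n ∈ Finset.range (N + 1), C n :=
      Finset.sum_nonneg fun n _ => hC0 n
    linarith
  · intro n hn t
    refine (hC n t).trans ?_
    apply mul_le_mul_of_nonneg_right _ (Real.exp_pos _).le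
    have h1 : C n ≤ ∑ m ∈ Finset.range (N + 1), C m :=
      Finset.single_le_sum (fun m _ => hC0 m) (Finset.mem_range.mpr (by omega))
    linarith

lemma norm_sq_eq {d : ℕ} (w : Euc d) : ‖w‖ ^ 2 = ∑ i, (w i) ^ 2 := by
  rw [EuclideanSpace.norm_eq, Real.sq_sqrt (by positivity)]
  exact Finset.sum_congr rfl fun i _ => by rw [Real.norm_eq_abs, sq_abs]

section FB
variable {d : ℕ} {c p ε D : ℝ} {N : ℕ}

lemma gd_zero_bound (hc : 0 ≤ c) (hp0 : 0 ≤ p) (hp1 : p ≤ 1) (t : ℝ) :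
    |gd c p 0 t| ≤ Real.exp (c * t ^ 2) := by
  have hE : (1:ℝ) ≤ Real.exp (c * t ^ 2) := Real.one_le_exp (by positivity)
  have h0 : 0 ≤ gd c p 0 t := by
    show 0 ≤ p + (1 - p) * Real.exp (c * t ^ 2)
    nlinarith
  rw [abs_of_nonneg h0]
  show p + (1 - p) * Real.exp (c * t ^ 2) ≤ _
  nlinarith

lemma gd_succ_bound (hp1 : p ≤ 1)
    (hD : ∀ n ≤ N, ∀ t, |(Ppoly c n).eval t| ≤ D * Real.exp (ε * t ^ 2))
    {n : ℕ} (hn : n + 1 ≤ N) (t : ℝ) :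
    |gd c p (n + 1) t| ≤ (1 - p) * D * Real.exp ((c + ε) * t ^ 2) := by
  show |(1 - p) * ((Ppoly c (n + 1)).eval t * Real.exp (c * t ^ 2))| ≤ _
  rw [abs_mul, abs_mul, abs_of_nonneg (by linarith : (0:ℝ) ≤ 1 - p),
    abs_of_nonneg (Real.exp_pos _).le]
  have h := hD (n + 1) hn t
  calc (1 - p) * (|(Ppoly c (n + 1)).eval t| * Real.exp (c * t ^ 2))
      ≤ (1 - p) * ((D * Real.exp (ε * t ^ 2)) * Real.exp (c * t ^ 2)) := by
        apply mul_le_mul_of_nonneg_left _ (by linarith)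
        exact mul_le_mul_of_nonneg_right h (Real.exp_pos _).le
    _ = (1 - p) * D * (Real.exp (ε * t ^ 2) * Real.exp (c * t ^ 2)) := by ring
    _ = (1 - p) * D * Real.exp ((c + ε) * t ^ 2) := by
        rw [← Real.exp_add]; ring_nf

lemma gd_bound_any (hc : 0 ≤ c) (hp0 : 0 ≤ p) (hp1 : p ≤ 1) (hε : 0 ≤ ε) (hD1 : 1 ≤ D)
    (hD : ∀ n ≤ N, ∀ t, |(Ppoly c n).eval t| ≤ D * Real.exp (ε * t ^ 2))
    {n : ℕ} (hn : n ≤ N) (t : ℝ) :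
    |gd c p n t| ≤ D * Real.exp ((c + ε) * t ^ 2) := by
  cases n with
  | zero =>
    refine (gd_zero_bound hc hp0 hp1 t).trans ?_
    have h1 : Real.exp (c * t ^ 2) ≤ Real.exp ((c + ε) * t ^ 2) :=
      Real.exp_le_exp.mpr (by nlinarith)
    nlinarith [Real.exp_pos ((c + ε) * t ^ 2)]
  | succ n =>
    refine (gd_succ_bound hp1 hD hn t).trans ?_
    have h1 := Real.exp_pos ((c + ε) * t ^ 2)
    nlinarith [mul_nonneg (mul_nonneg hp0 (by linarith : (0:ℝ) ≤ D)) h1.le]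

lemma Ff_bound (hc : 0 ≤ c) (hp0 : 0 ≤ p) (hp1 : p ≤ 1) (hε : 0 ≤ ε) (hD1 : 1 ≤ D)
    (hD : ∀ n ≤ N, ∀ t, |(Ppoly c n).eval t| ≤ D * Real.exp (ε * t ^ 2))
    (m : Fin d → ℕ) (hm : ∀ i, m i ≤ N) (w : Euc d) :
    |Ff d c p m w| ≤ D ^ d * Real.exp ((c + ε) * ‖w‖ ^ 2) := by
  rw [Ff, Finset.abs_prod]
  have h := Finset.prod_le_prod (s := Finset.univ)
    (f := fun i => |gd c p (m i) (w i)|)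
    (g := fun i => D * Real.exp ((c + ε) * (w i) ^ 2))
    (fun i _ => abs_nonneg _)
    (fun i _ => gd_bound_any hc hp0 hp1 hε hD1 hD (hm i) (w i))
  refine h.trans ?_
  rw [Finset.prod_mul_distrib, Finset.prod_const, norm_sq_eq, Finset.mul_sum,
    Real.exp_sum, Finset.card_univ, Fintype.card_fin]

lemma Ff_bound_q (hc : 0 ≤ c) (hp0 : 0 ≤ p) (hp1 : p ≤ 1) (hε : 0 ≤ ε) (hD1 : 1 ≤ D)
    (hD : ∀ n ≤ N, ∀ t, |(Ppoly c n).eval t| ≤ D * Real.exp (ε * t ^ 2))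
    (m : Fin d → ℕ) (hm : ∀ i, m i ≤ N) {i₀ : Fin d} (hi₀ : m i₀ ≠ 0) (w : Euc d) :
    |Ff d c p m w| ≤ (1 - p) * (D ^ d * Real.exp ((c + ε) * ‖w‖ ^ 2)) := by
  rw [Ff, Finset.abs_prod]
  rw [← Finset.mul_prod_erase Finset.univ _ (Finset.mem_univ i₀)]
  obtain ⟨n, hn⟩ : ∃ n, m i₀ = n + 1 := ⟨m i₀ - 1, by omega⟩
  have h1 : |gd c p (m i₀) (w i₀)| ≤ (1 - p) * D * Real.exp ((c + ε) * (w i₀) ^ 2) := by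
    rw [hn]; exact gd_succ_bound hp1 hD (hn ▸ hm i₀) (w i₀)
  have h2 : ∏ i ∈ Finset.univ.erase i₀, |gd c p (m i) (w i)|
      ≤ ∏ i ∈ Finset.univ.erase i₀, D * Real.exp ((c + ε) * (w i) ^ 2) :=
    Finset.prod_le_prod (fun i _ => abs_nonneg _)
      (fun i _ => gd_bound_any hc hp0 hp1 hε hD1 hD (hm i) (w i))
  have h3 : |gd c p (m i₀) (w i₀)| * ∏ i ∈ Finset.univ.erase i₀, |gd c p (m i) (w i)|
      ≤ ((1 - p) * D * Real.exp ((c + ε) * (w i₀) ^ 2)) *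
        ∏ i ∈ Finset.univ.erase i₀, D * Real.exp ((c + ε) * (w i) ^ 2) := by
    apply mul_le_mul h1 h2 (Finset.prod_nonneg fun i _ => abs_nonneg _)
    exact mul_nonneg (mul_nonneg (by linarith) (by linarith)) (Real.exp_pos _).le
  refine h3.trans ?_
  have h4 : ((1 - p) * D * Real.exp ((c + ε) * (w i₀) ^ 2)) *
        ∏ i ∈ Finset.univ.erase i₀, D * Real.exp ((c + ε) * (w i) ^ 2)
      = (1 - p) * ∏ i, D * Real.exp ((c + ε) * (w i) ^ 2) := by
    rw [← Finset.mul_prod_erase Finset.univ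
      (fun i => D * Real.exp ((c + ε) * (w i) ^ 2)) (Finset.mem_univ i₀)]
    ring
  rw [h4, Finset.prod_mul_distrib, Finset.prod_const, norm_sq_eq, Finset.mul_sum,
    Real.exp_sum, Finset.card_univ, Fintype.card_fin]

lemma prod_one_add (hp0 : 0 ≤ p) (hp1 : p ≤ 1) (s : Finset (Fin d)) (E : Fin d → ℝ)
    (hE : ∀ i, 1 ≤ E i) :
    (∏ i ∈ s, (p + (1 - p) * E i)) ≤ 1 + (1 - p) * ∏ i ∈ s, (2 * E i) := by
  classical
  induction s using Finset.induction_on with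
  | empty => simp; linarith
  | insert a s hna ih =>
    rw [Finset.prod_insert hna, Finset.prod_insert hna]
    have hEa := hE a
    have ha1 : (0:ℝ) ≤ E a - 1 := by linarith
    have hq0 : (0:ℝ) ≤ 1 - p := by linarith
    have hP1 : (1:ℝ) ≤ ∏ i ∈ s, (2 * E i) :=
      one_le_rprod s _ fun i _ => by nlinarith [hE i]
    have hP0 : (0:ℝ) ≤ ∏ i ∈ s, (2 * E i) := by linarith
    have hQ0 : (0:ℝ) ≤ ∏ i ∈ s, (p + (1 - p) * E i) := by
      have := one_le_rprod s (fun i => p + (1 - p) * E i) fun i _ => by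
        show (1:ℝ) ≤ p + (1 - p) * E i
        nlinarith [hE i]
      linarith
    set P := ∏ i ∈ s, (2 * E i) with hP
    set Q := ∏ i ∈ s, (p + (1 - p) * E i) with hQ
    have hfac : p + (1 - p) * E a = 1 + (1 - p) * (E a - 1) := by ring
    have hnn : (0:ℝ) ≤ (1 - p) * (E a - 1) := mul_nonneg hq0 ha1
    have step1 : (p + (1 - p) * E a) * Q ≤ (1 + (1 - p) * (E a - 1)) * (1 + (1 - p) * P) := by
      rw [hfac]
      exact mul_le_mul_of_nonneg_left ih (by linarith)
    refine step1.trans ?_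
    nlinarith [mul_nonneg (mul_nonneg hq0 ha1) hP0,
      mul_nonneg (mul_nonneg hq0 ha1) (by linarith : (0:ℝ) ≤ P - 1),
      mul_nonneg (mul_nonneg hq0 ha1) (mul_nonneg hp0 hP0),
      mul_nonneg (mul_nonneg (mul_nonneg hq0 hq0) ha1) (by linarith : (0:ℝ) ≤ P - 1),
      mul_nonneg hq0 (by linarith : (0:ℝ) ≤ P - 1)]

lemma KBK_zero_bound (hc : 0 ≤ c) (hp0 : 0 ≤ p) (hp1 : p ≤ 1) (w : Euc d) :
    |Ff d c p (fun _ => 0) w - 1| ≤ (1 - p) * (2 ^ d * Real.exp (c * ‖w‖ ^ 2)) := by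
  have hE : ∀ i : Fin d, 1 ≤ Real.exp (c * (w i) ^ 2) :=
    fun i => Real.one_le_exp (by positivity)
  have hFf : Ff d c p (fun _ => 0) w = ∏ i, (p + (1 - p) * Real.exp (c * (w i) ^ 2)) := rfl
  have h1 : 1 ≤ Ff d c p (fun _ => 0) w := by
    rw [hFf]
    exact one_le_rprod _ _ fun i _ => by nlinarith [hE i]
  have h2 := prod_one_add hp0 hp1 Finset.univ (fun i => Real.exp (c * (w i) ^ 2)) hE
  rw [abs_of_nonneg (by linarith)]
  have h3 : ∏ i, (2 * Real.exp (c * (w i) ^ 2)) = 2 ^ d * Real.exp (c * ‖w‖ ^ 2) := by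
    rw [Finset.prod_mul_distrib, Finset.prod_const, norm_sq_eq, Finset.mul_sum,
      Real.exp_sum, Finset.card_univ, Fintype.card_fin]
  rw [hFf]
  rw [h3] at h2
  linarith

end FB
end chunk4


section chunk5
variable {d r₀ : ℕ} {c p ε D : ℝ}

lemma zNorm_neg (ζ : ℝ) (F : Euc d → ℝ) :
    zNorm d r₀ ζ (fun z => -F z) = zNorm d r₀ ζ F := by
  unfold zNorm
  refine iSup_congr fun z => ?_
  congr 1
  unfold wfun
  refine Finset.sum_congr rfl fun α _ => ?_
  simp only [pderMulti_neg, abs_neg]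

lemma exp_factor_le (hce0 : 0 ≤ c + ε) (hce : c + ε ≤ 1 / 2) (u z : Euc d) (hu : ‖u‖ ≤ 1) :
    Real.exp ((c + ε) * ‖z - u‖ ^ 2) * Real.exp (-1 * ‖z‖ ^ 2) ≤ Real.exp 1 := by
  rw [← Real.exp_add, Real.exp_le_exp]
  have h1 : ‖z - u‖ ≤ ‖z‖ + ‖u‖ := norm_sub_le z u
  have h2 : ‖z - u‖ ^ 2 ≤ 2 * ‖z‖ ^ 2 + 2 := by
    have h1a := pow_le_pow_left₀ (norm_nonneg (z - u)) h1 2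
    nlinarith [sq_nonneg (‖z‖ - ‖u‖), norm_nonneg u, norm_nonneg z, hu]
  nlinarith [mul_nonneg hce0 (by linarith : (0:ℝ) ≤ 2 * ‖z‖ ^ 2 + 2 - ‖z - u‖ ^ 2),
    mul_nonneg (by linarith : (0:ℝ) ≤ 1 / 2 - (c + ε)) (by positivity : (0:ℝ) ≤ 2 * ‖z‖ ^ 2 + 2)]

variable (hc : 0 ≤ c) (hp0 : 0 ≤ p) (hp1 : p ≤ 1) (hε : 0 < ε)
  (hce : c + ε ≤ 1 / 2) (hD1 : 1 ≤ D)
  (hD : ∀ n ≤ r₀ + 3, ∀ t, |(Ppoly c n).eval t| ≤ D * Real.exp (ε * t ^ 2))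

include hc hp0 hp1 hε hce hD1 hD in
lemma term_Ff_le (m : Fin d → ℕ) (hm : ∀ j, m j ≤ r₀ + 3) (u z : Euc d) (hu : ‖u‖ ≤ 1) :
    |Ff d c p m (z - u)| * Real.exp (-1 * ‖z‖ ^ 2) ≤ D ^ d * Real.exp 1 := by
  have h1 := Ff_bound (N := r₀ + 3) hc hp0 hp1 hε.le hD1 hD m hm (z - u)
  have h2 := exp_factor_le (by positivity) hce u z hu
  have hDd : (0:ℝ) < D ^ d := by positivity
  calc |Ff d c p m (z - u)| * Real.exp (-1 * ‖z‖ ^ 2)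
      ≤ (D ^ d * Real.exp ((c + ε) * ‖z - u‖ ^ 2)) * Real.exp (-1 * ‖z‖ ^ 2) :=
        mul_le_mul_of_nonneg_right h1 (Real.exp_pos _).le
    _ = D ^ d * (Real.exp ((c + ε) * ‖z - u‖ ^ 2) * Real.exp (-1 * ‖z‖ ^ 2)) := by ring
    _ ≤ D ^ d * Real.exp 1 := mul_le_mul_of_nonneg_left h2 hDd.le

include hc hp0 hp1 hε hce hD1 hD in
lemma zNorm_Ff_le (m : Fin d → ℕ) (hm : ∀ j, m j ≤ 3) (u : Euc d) (hu : ‖u‖ ≤ 1) :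
    zNorm d r₀ 1 (fun z => Ff d c p m (z - u)) ≤
      ENNReal.ofReal ((Fintype.card (Fin d → Fin (r₀ + 1)) : ℝ) * (D ^ d * Real.exp 1)) := by
  refine iSup_le fun z => ?_
  apply ENNReal.ofReal_le_ofReal
  unfold wfun
  have hterm : ∀ α ∈ mIdx d r₀,
      (1:ℝ) ^ (∑ i, (α i : ℕ)) * |pderMulti (fun i => (α i : ℕ))
        (fun z => Ff d c p m (z - u)) z| * Real.exp (-((1:ℝ) ^ 2)⁻¹ * ‖z‖ ^ 2)
      ≤ D ^ d * Real.exp 1 := by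
    intro α _
    rw [one_pow, one_mul, pderMulti_Ff,
      show (-(((1:ℝ)) ^ 2)⁻¹ : ℝ) = -1 by norm_num]
    exact term_Ff_le hc hp0 hp1 hε hce hD1 hD _
      (fun j => by have h1 := (α j).is_le; have h2 := hm j; omega) u z hu
  refine (Finset.sum_le_card_nsmul _ _ _ hterm).trans ?_
  rw [nsmul_eq_mul]
  apply mul_le_mul_of_nonneg_right _ (by positivity)
  exact_mod_cast Nat.cast_le.mpr (Finset.card_le_univ _)

include hc hp0 hp1 hε hce hD1 hD in
lemma zNorm_KBK_le {κ : ℝ} (hκ : c = 1 / 2 * (1 - κ)) (u : Euc d) (hu : ‖u‖ ≤ 1) :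
    zNorm d r₀ 1 (KBK d κ p u) ≤
      ENNReal.ofReal ((1 - p) * ((Fintype.card (Fin d → Fin (r₀ + 1)) : ℝ) *
        ((2 ^ d + D ^ d) * Real.exp 1))) := by
  have hKBK : KBK d κ p u = fun z => Ff d c p (fun _ => 0) (z - u) - 1 := by
    rw [KBK_eq κ u, hκ]
  rw [hKBK]
  refine iSup_le fun z => ?_
  apply ENNReal.ofReal_le_ofReal
  unfold wfun
  have hterm : ∀ α ∈ mIdx d r₀,
      (1:ℝ) ^ (∑ i, (α i : ℕ)) * |pderMulti (fun i => (α i : ℕ))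
        (fun z => Ff d c p (fun _ => 0) (z - u) - 1) z| *
        Real.exp (-((1:ℝ) ^ 2)⁻¹ * ‖z‖ ^ 2)
      ≤ (1 - p) * ((2 ^ d + D ^ d) * Real.exp 1) := by
    intro α _
    rw [one_pow, one_mul, pderMulti_sub_const, pderMulti_Ff,
      show (-(((1:ℝ)) ^ 2)⁻¹ : ℝ) = -1 by norm_num]
    simp only [zero_add]
    have h2x : (0:ℝ) < 2 ^ d := by positivity
    have hDd : (0:ℝ) < D ^ d := by positivity
    have hq0 : (0:ℝ) ≤ 1 - p := by linarith
    by_cases hα : ∀ j : Fin d, (α j : ℕ) = 0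
    · rw [if_pos hα, show (fun j : Fin d => ((α j : ℕ))) = (fun _ : Fin d => 0) from
        funext fun j => hα j]
      have h1 := KBK_zero_bound (d := d) hc hp0 hp1 (z - u)
      have h2 : Real.exp (c * ‖z - u‖ ^ 2) * Real.exp (-1 * ‖z‖ ^ 2) ≤ Real.exp 1 := by
        refine le_trans ?_ (exp_factor_le (by positivity) hce u z hu)
        apply mul_le_mul_of_nonneg_right _ (Real.exp_pos _).le
        exact Real.exp_le_exp.mpr (by nlinarith [sq_nonneg ‖z - u‖, hε.le])
      calc |Ff d c p (fun _ => 0) (z - u) - 1| * Real.exp (-1 * ‖z‖ ^ 2)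
          ≤ ((1 - p) * (2 ^ d * Real.exp (c * ‖z - u‖ ^ 2))) * Real.exp (-1 * ‖z‖ ^ 2) :=
            mul_le_mul_of_nonneg_right h1 (Real.exp_pos _).le
        _ = (1 - p) * (2 ^ d * (Real.exp (c * ‖z - u‖ ^ 2) * Real.exp (-1 * ‖z‖ ^ 2))) := by
            ring
        _ ≤ (1 - p) * (2 ^ d * Real.exp 1) := by
            apply mul_le_mul_of_nonneg_left _ hq0
            exact mul_le_mul_of_nonneg_left h2 h2x.le
        _ ≤ (1 - p) * ((2 ^ d + D ^ d) * Real.exp 1) := by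
            apply mul_le_mul_of_nonneg_left _ hq0
            nlinarith [Real.exp_pos (1:ℝ)]
    · rw [if_neg hα, sub_zero]
      push_neg at hα
      obtain ⟨j₀, hj₀⟩ := hα
      have h1 := Ff_bound_q (N := r₀ + 3) hc hp0 hp1 hε.le hD1 hD
        (fun j => ((α j : ℕ)))
        (fun j => by have := (α j).is_le; omega)
        (i₀ := j₀) (by simpa using hj₀) (z - u)
      have h2 := exp_factor_le (by positivity) hce u z hu
      calc |Ff d c p (fun j => ((α j : ℕ))) (z - u)| *
            Real.exp (-1 * ‖z‖ ^ 2)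
          ≤ ((1 - p) * (D ^ d * Real.exp ((c + ε) * ‖z - u‖ ^ 2))) * Real.exp (-1 * ‖z‖ ^ 2) :=
            mul_le_mul_of_nonneg_right h1 (Real.exp_pos _).le
        _ = (1 - p) * (D ^ d * (Real.exp ((c + ε) * ‖z - u‖ ^ 2) * Real.exp (-1 * ‖z‖ ^ 2))) := by
            ring
        _ ≤ (1 - p) * (D ^ d * Real.exp 1) := by
            apply mul_le_mul_of_nonneg_left _ hq0
            exact mul_le_mul_of_nonneg_left h2 hDd.le
        _ ≤ (1 - p) * ((2 ^ d + D ^ d) * Real.exp 1) := by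
            apply mul_le_mul_of_nonneg_left _ hq0
            nlinarith [Real.exp_pos (1:ℝ)]
  refine (Finset.sum_le_card_nsmul _ _ _ hterm).trans ?_
  rw [nsmul_eq_mul]
  have hB : (0:ℝ) ≤ (1 - p) * ((2 ^ d + D ^ d) * Real.exp 1) := by
    have : (0:ℝ) < (2 ^ d + D ^ d) * Real.exp 1 := by positivity
    nlinarith
  calc ((mIdx d r₀).card : ℝ) * ((1 - p) * ((2 ^ d + D ^ d) * Real.exp 1))
      ≤ (Fintype.card (Fin d → Fin (r₀ + 1)) : ℝ) *
        ((1 - p) * ((2 ^ d + D ^ d) * Real.exp 1)) := by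
        apply mul_le_mul_of_nonneg_right _ hB
        exact_mod_cast Nat.cast_le.mpr (Finset.card_le_univ _)
    _ = (1 - p) * ((Fintype.card (Fin d → Fin (r₀ + 1)) : ℝ) *
        ((2 ^ d + D ^ d) * Real.exp 1)) := by ring

end chunk5


lemma ennreal_nat_mul_ofReal (n : ℕ) (x : ℝ) (hx : 0 ≤ x) :
    (n : ℝ≥0∞) * ENNReal.ofReal x = ENNReal.ofReal (n * x) := by
  rw [ENNReal.ofReal_mul (by positivity), ENNReal.ofReal_natCast]



/-- Bounds on the Mayer function of the Biskup–Kotecký potential and its first three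
`u`-derivatives, for `p` close enough to `1`. -/
theorem bk_mayer_function_bounds (d r₀ : ℕ) (hd : 1 ≤ d) (κ : ℝ)
    (hκ0 : 0 < κ) (hκ1 : κ < 1) :
    ∀ ρ : ℝ, 0 < ρ →
      ∃ δ > (0 : ℝ), ∃ ζ > (0 : ℝ), ∃ M > (0 : ℝ), ∃ p₀ : ℝ, 0 < p₀ ∧ p₀ < 1 ∧
        ∀ p : ℝ, p₀ < p → p ≤ 1 → ∀ u : Euc d, ‖u‖ ≤ δ →
          zNorm d r₀ ζ (KBK d κ p u) ≤ ENNReal.ofReal ρ ∧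
          (∑ i, zNorm d r₀ ζ (KBKd1 d κ p i u)) +
              (∑ i, ∑ j, zNorm d r₀ ζ (KBKd2 d κ p i j u)) +
              (∑ i, ∑ j, ∑ k, zNorm d r₀ ζ (KBKd3 d κ p i j k u)) ≤
            ENNReal.ofReal M := by
  intro ρ hρ
  have hc : (0:ℝ) ≤ 1 / 2 * (1 - κ) := by linarith
  have hε : (0:ℝ) < κ / 4 := by linarith
  have hce : 1 / 2 * (1 - κ) + κ / 4 ≤ 1 / 2 := by linarith
  obtain ⟨D, hD1, hD⟩ := exists_D (1 / 2 * (1 - κ)) hε (r₀ + 3)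
  have hcard : (0:ℝ) < (Fintype.card (Fin d → Fin (r₀ + 1)) : ℝ) := by
    exact_mod_cast Fintype.card_pos
  set B : ℝ := (Fintype.card (Fin d → Fin (r₀ + 1)) : ℝ) * (D ^ d * Real.exp 1) with hB_def
  have hB0 : 0 < B := by
    apply mul_pos hcard
    positivity
  set B₂ : ℝ := (Fintype.card (Fin d → Fin (r₀ + 1)) : ℝ) *
    ((2 ^ d + D ^ d) * Real.exp 1) with hB₂_def
  have hB₂ : 0 < B₂ := by
    apply mul_pos hcard
    positivity
  have hM0 : (0:ℝ) < ((d + d ^ 2 + d ^ 3 : ℕ) : ℝ) * B + 1 := by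
    have : (0:ℝ) ≤ ((d + d ^ 2 + d ^ 3 : ℕ) : ℝ) := Nat.cast_nonneg _
    nlinarith
  refine ⟨1, one_pos, 1, one_pos, ((d + d ^ 2 + d ^ 3 : ℕ) : ℝ) * B + 1, hM0,
    max (1 / 2) (1 - ρ / B₂), lt_of_lt_of_le (by norm_num) (le_max_left _ _),
    max_lt (by norm_num) (by have : 0 < ρ / B₂ := div_pos hρ hB₂; linarith), ?_⟩
  intro p hp₀ hp1 u hu
  have hphalf : (1:ℝ) / 2 < p := lt_of_le_of_lt (le_max_left _ _) hp₀
  have hp0 : (0:ℝ) ≤ p := by linarith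
  have hq : 1 - p ≤ ρ / B₂ := by
    have := lt_of_le_of_lt (le_max_right _ _) hp₀
    linarith
  constructor
  · refine (zNorm_KBK_le hc hp0 hp1 hε hce hD1 hD rfl u hu).trans ?_
    apply ENNReal.ofReal_le_ofReal
    calc (1 - p) * B₂ ≤ (ρ / B₂) * B₂ := by
          apply mul_le_mul_of_nonneg_right hq hB₂.le
      _ = ρ := div_mul_cancel₀ ρ hB₂.ne'
  · have hker1 : ∀ i, zNorm d r₀ 1 (KBKd1 d κ p i u) ≤ ENNReal.ofReal B := by
      intro i
      rw [KBKd1_eq κ i u, zNorm_neg]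
      exact zNorm_Ff_le hc hp0 hp1 hε hce hD1 hD (eIdx i)
        (fun j => by unfold eIdx; split_ifs <;> omega) u hu
    have hker2 : ∀ i j, zNorm d r₀ 1 (KBKd2 d κ p i j u) ≤ ENNReal.ofReal B := by
      intro i j
      rw [KBKd2_eq κ i j u]
      exact zNorm_Ff_le hc hp0 hp1 hε hce hD1 hD _
        (fun l => by unfold eIdx; split_ifs <;> omega) u hu
    have hker3 : ∀ i j k, zNorm d r₀ 1 (KBKd3 d κ p i j k u) ≤ ENNReal.ofReal B := by
      intro i j k
      rw [KBKd3_eq κ i j k u, zNorm_neg]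
      exact zNorm_Ff_le hc hp0 hp1 hε hce hD1 hD _
        (fun l => by unfold eIdx; split_ifs <;> omega) u hu
    have hsum1 : (∑ i, zNorm d r₀ 1 (KBKd1 d κ p i u)) ≤ ENNReal.ofReal (d * B) := by
      calc (∑ i, zNorm d r₀ 1 (KBKd1 d κ p i u)) ≤ ∑ _i : Fin d, ENNReal.ofReal B :=
            Finset.sum_le_sum fun i _ => hker1 i
        _ = (d : ℝ≥0∞) * ENNReal.ofReal B := by
            rw [Finset.sum_const, Finset.card_univ, Fintype.card_fin, nsmul_eq_mul]
        _ = ENNReal.ofReal (d * B) := ennreal_nat_mul_ofReal d B hB0.le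
    have hsum2 : (∑ i, ∑ j, zNorm d r₀ 1 (KBKd2 d κ p i j u))
        ≤ ENNReal.ofReal (d * (d * B)) := by
      calc (∑ i, ∑ j, zNorm d r₀ 1 (KBKd2 d κ p i j u))
          ≤ ∑ _i : Fin d, ENNReal.ofReal (d * B) := by
            refine Finset.sum_le_sum fun i _ => ?_
            calc (∑ j, zNorm d r₀ 1 (KBKd2 d κ p i j u)) ≤ ∑ _j : Fin d, ENNReal.ofReal B :=
                  Finset.sum_le_sum fun j _ => hker2 i j
              _ = (d : ℝ≥0∞) * ENNReal.ofReal B := by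
                  rw [Finset.sum_const, Finset.card_univ, Fintype.card_fin, nsmul_eq_mul]
              _ = ENNReal.ofReal (d * B) := ennreal_nat_mul_ofReal d B hB0.le
        _ = (d : ℝ≥0∞) * ENNReal.ofReal (d * B) := by
            rw [Finset.sum_const, Finset.card_univ, Fintype.card_fin, nsmul_eq_mul]
        _ = ENNReal.ofReal (d * (d * B)) := ennreal_nat_mul_ofReal d _ (by positivity)
    have hsum3 : (∑ i, ∑ j, ∑ k, zNorm d r₀ 1 (KBKd3 d κ p i j k u))
        ≤ ENNReal.ofReal (d * (d * (d * B))) := by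
      calc (∑ i, ∑ j, ∑ k, zNorm d r₀ 1 (KBKd3 d κ p i j k u))
          ≤ ∑ _i : Fin d, ENNReal.ofReal (d * (d * B)) := by
            refine Finset.sum_le_sum fun i _ => ?_
            calc (∑ j, ∑ k, zNorm d r₀ 1 (KBKd3 d κ p i j k u))
                ≤ ∑ _j : Fin d, ENNReal.ofReal (d * B) := by
                  refine Finset.sum_le_sum fun j _ => ?_
                  calc (∑ k, zNorm d r₀ 1 (KBKd3 d κ p i j k u))
                      ≤ ∑ _k : Fin d, ENNReal.ofReal B :=
                        Finset.sum_le_sum fun k _ => hker3 i j k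
                    _ = (d : ℝ≥0∞) * ENNReal.ofReal B := by
                        rw [Finset.sum_const, Finset.card_univ, Fintype.card_fin, nsmul_eq_mul]
                    _ = ENNReal.ofReal (d * B) := ennreal_nat_mul_ofReal d B hB0.le
              _ = (d : ℝ≥0∞) * ENNReal.ofReal (d * B) := by
                  rw [Finset.sum_const, Finset.card_univ, Fintype.card_fin, nsmul_eq_mul]
              _ = ENNReal.ofReal (d * (d * B)) := ennreal_nat_mul_ofReal d _ (by positivity)
        _ = (d : ℝ≥0∞) * ENNReal.ofReal (d * (d * B)) := by
            rw [Finset.sum_const, Finset.card_univ, Fintype.card_fin, nsmul_eq_mul]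
        _ = ENNReal.ofReal (d * (d * (d * B))) := ennreal_nat_mul_ofReal d _ (by positivity)
    calc (∑ i, zNorm d r₀ 1 (KBKd1 d κ p i u)) +
            (∑ i, ∑ j, zNorm d r₀ 1 (KBKd2 d κ p i j u)) +
            (∑ i, ∑ j, ∑ k, zNorm d r₀ 1 (KBKd3 d κ p i j k u))
        ≤ ENNReal.ofReal (d * B) + ENNReal.ofReal (d * (d * B)) +
            ENNReal.ofReal (d * (d * (d * B))) :=
          add_le_add (add_le_add hsum1 hsum2) hsum3
      _ = ENNReal.ofReal (d * B + d * (d * B) + d * (d * (d * B))) := by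
          rw [← ENNReal.ofReal_add (by positivity) (by positivity),
            ← ENNReal.ofReal_add (by positivity) (by positivity)]
      _ ≤ ENNReal.ofReal (((d + d ^ 2 + d ^ 3 : ℕ) : ℝ) * B + 1) := by
          apply ENNReal.ofReal_le_ofReal
          push_cast
          nlinarith [hB0]


end
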